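/- arXiv:2005.13321 — 4 statements merged into one kernel-verified Lean document; each statement's English description precedes it below -/
import Mathlib

section
/- Let A, R, Q be n×n real matrices with R and Q positive semidefinite, let g ∈ (0,1) and l₀ ≥ 1 a natural number, and define H(d) = Σ_{i=0}^{d−1} A^i R (A^i)ᵀ and c(d, l) = Σ_{i=d}^{d+l−1} Tr(Q·H(i)). Then, as sums with values in [0,∞]: Σ_{i=1}^∞ (1−g) g^{i−1} c(i·l₀, l₀) ≤ (l₀(1−g)/g²) · Σ_{i=2}^∞ g^{i} Tr(Q·H(i·l₀)). -/
open Matrix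

/-- `covH A R d = ∑_{i=0}^{d-1} Aⁱ R (Aⁱ)ᵀ`, the state covariance matrix at
age-of-information `d`. -/
noncomputable def covH {n : ℕ} (A R : Matrix (Fin n) (Fin n) ℝ) (d : ℕ) :
    Matrix (Fin n) (Fin n) ℝ :=
  ∑ i ∈ Finset.range d, A ^ i * R * (A ^ i)ᵀ

/-- `stageCost A R Q d l = ∑_{i=d}^{d+l-1} Tr(Q·H(i))`, the one-stage cost of a
packet of length `l` started at age-of-information `d`. -/
noncomputable def stageCost {n : ℕ} (A R Q : Matrix (Fin n) (Fin n) ℝ)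
    (d l : ℕ) : ℝ :=
  ∑ i ∈ Finset.Ico d (d + l), (Q * covH A R i).trace

lemma trace_cmul_self_nonneg {n : ℕ} (M : Matrix (Fin n) (Fin n) ℝ) :
    0 ≤ (Mᴴ * M).trace := by
  rw [Matrix.trace]
  refine Finset.sum_nonneg fun i _ => ?_
  have : (Mᴴ * M).diag i = ∑ j, M j i * M j i := by
    simp [Matrix.diag, Matrix.mul_apply, Matrix.conjTranspose_apply]
  rw [this]
  exact Finset.sum_nonneg fun j _ => mul_self_nonneg _

section
open scoped MatrixOrder in
lemma posSemidef_iff_eq_transpose_mul_self {n : ℕ} {P : Matrix (Fin n) (Fin n) ℝ} :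
    P.PosSemidef ↔ ∃ B : Matrix (Fin n) (Fin n) ℝ, P = Bᴴ * B := by
  refine ⟨fun hP => ?_, fun ⟨B, hB⟩ => hB ▸ posSemidef_conjTranspose_mul_self B⟩
  obtain ⟨X, hX, -, hXX⟩ :=
    CFC.exists_sqrt_of_isSelfAdjoint_of_quasispectrumRestricts hP.isHermitian
      (QuasispectrumRestricts.nnreal_of_nonneg hP.nonneg)
  exact ⟨X, by rw [← hXX]; exact congrArg (· * X) hX.star_eq.symm⟩
end

lemma trace_psd_mul_nonneg {n : ℕ} {Q P : Matrix (Fin n) (Fin n) ℝ}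
    (hQ : Q.PosSemidef) (hP : P.PosSemidef) : 0 ≤ (Q * P).trace := by
  obtain ⟨B, rfl⟩ := posSemidef_iff_eq_transpose_mul_self.mp hP
  obtain ⟨C, rfl⟩ := posSemidef_iff_eq_transpose_mul_self.mp hQ
  have h : (Cᴴ * C * (Bᴴ * B)).trace = ((C * Bᴴ)ᴴ * (C * Bᴴ)).trace := by
    rw [← Matrix.mul_assoc, Matrix.trace_mul_cycle]
    simp [Matrix.conjTranspose_mul, Matrix.mul_assoc]
  rw [h]
  exact trace_cmul_self_nonneg _

lemma term_psd {n : ℕ} {A R : Matrix (Fin n) (Fin n) ℝ} (hR : R.PosSemidef) (i : ℕ) :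
    (A ^ i * R * (A ^ i)ᵀ).PosSemidef := by
  rw [← conjTranspose_eq_transpose_of_trivial]
  exact hR.mul_mul_conjTranspose_same (A ^ i)

lemma traceQcov_eq {n : ℕ} (A R Q : Matrix (Fin n) (Fin n) ℝ) (d : ℕ) :
    (Q * covH A R d).trace = ∑ i ∈ Finset.range d, (Q * (A ^ i * R * (A ^ i)ᵀ)).trace := by
  rw [covH, Finset.mul_sum, Matrix.trace_sum]

lemma traceQcov_mono {n : ℕ} {A R Q : Matrix (Fin n) (Fin n) ℝ}
    (hR : R.PosSemidef) (hQ : Q.PosSemidef) {d e : ℕ} (h : d ≤ e) :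
    (Q * covH A R d).trace ≤ (Q * covH A R e).trace := by
  rw [traceQcov_eq, traceQcov_eq]
  exact Finset.sum_le_sum_of_subset_of_nonneg
    (Finset.range_subset_range.mpr h)
    (fun i _ _ => trace_psd_mul_nonneg hQ (term_psd hR i))

lemma traceQcov_nonneg {n : ℕ} {A R Q : Matrix (Fin n) (Fin n) ℝ}
    (hR : R.PosSemidef) (hQ : Q.PosSemidef) (d : ℕ) :
    0 ≤ (Q * covH A R d).trace := by
  rw [traceQcov_eq]
  exact Finset.sum_nonneg fun i _ => trace_psd_mul_nonneg hQ (term_psd hR i)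

/-- upper bound (18) in the proof of Theorem 1, as sums in `[0,∞]`:
`∑_{i=1}^∞ (1−g) g^(i−1) c(i·l₀, l₀) ≤ (l₀(1−g)/g²) ∑_{i=2}^∞ gⁱ Tr(Q·H(i·l₀))`. -/
theorem fixed_length_cost_upper_bound {n : ℕ}
    (A R Q : Matrix (Fin n) (Fin n) ℝ)
    (hR : R.PosSemidef) (hQ : Q.PosSemidef)
    (g : ℝ) (hg : g ∈ Set.Ioo (0 : ℝ) 1) (l₀ : ℕ) (hl₀ : 1 ≤ l₀) :
    (∑' i : ℕ, ENNReal.ofReal ((1 - g) * g ^ i * stageCost A R Q ((i + 1) * l₀) l₀))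
      ≤ ENNReal.ofReal ((l₀ : ℝ) * (1 - g) / g ^ 2) *
        ∑' i : ℕ, ENNReal.ofReal (g ^ (i + 2) * (Q * covH A R ((i + 2) * l₀)).trace) := by
  simp only [stageCost]

  obtain ⟨hg0, hg1⟩ := hg
  set C : ℝ := (l₀ : ℝ) * (1 - g) / g ^ 2 with hC
  have h1g : (0:ℝ) ≤ 1 - g := by linarith
  have hCnn : 0 ≤ C := by
    apply div_nonneg
    · exact mul_nonneg (Nat.cast_nonneg _) h1g
    · positivity
  rw [← ENNReal.tsum_mul_left]
  refine ENNReal.tsum_le_tsum fun i => ?_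
  set T : ℝ := (Q * covH A R ((i + 2) * l₀)).trace with hT
  have hTnn : 0 ≤ T := traceQcov_nonneg hR hQ _
  rw [← ENNReal.ofReal_mul hCnn]
  refine ENNReal.ofReal_le_ofReal ?_
  have hsum : (∑ j ∈ Finset.Ico ((i+1)*l₀) ((i+1)*l₀ + l₀), (Q * covH A R j).trace)
      ≤ (l₀ : ℝ) * T := by
    calc (∑ j ∈ Finset.Ico ((i+1)*l₀) ((i+1)*l₀ + l₀), (Q * covH A R j).trace)
        ≤ ∑ j ∈ Finset.Ico ((i+1)*l₀) ((i+1)*l₀ + l₀), T := by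
          refine Finset.sum_le_sum fun j hj => ?_
          refine traceQcov_mono hR hQ ?_
          have h2 := (Finset.mem_Ico.mp hj).2
          have he : (i+1)*l₀ + l₀ = (i+2)*l₀ := by ring
          omega
      _ = (l₀ : ℝ) * T := by
          rw [Finset.sum_const, Nat.card_Ico]
          simp [nsmul_eq_mul]
  have hkey : C * (g ^ (i + 2) * T) = (1 - g) * g ^ i * ((l₀ : ℝ) * T) := by
    rw [hC]
    field_simp
    ring
  rw [hkey]
  have h1 : 0 ≤ (1 - g) * g ^ i := mul_nonneg h1g (by positivity)
  exact mul_le_mul_of_nonneg_left hsum h1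
end

section
/- Let A, R, Q be n×n real matrices with R and Q positive semidefinite, define H(d) = Σ_{i=0}^{d−1} A^i R (A^i)ᵀ, and let ρ(A) denote the spectral radius of A (the maximum modulus of its complex eigenvalues). If q ∈ (0,1) and q·ρ(A)² < 1, then the series Σ_{i=1}^∞ q^i Tr(Q·H(i)) converges. -/
open Matrix

/-- The spectral radius of a real matrix: the maximum modulus of its complex
eigenvalues. -/
noncomputable def specRad {n : ℕ} (A : Matrix (Fin n) (Fin n) ℝ) : ℝ :=
  sSup ((fun z : ℂ => ‖z‖) '' spectrum ℂ (A.map Complex.ofReal))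

section Aux

attribute [local instance] Matrix.frobeniusNormedAddCommGroup
  Matrix.frobeniusNormedRing Matrix.frobeniusNormedAlgebra

open Filter
open scoped ENNReal NNReal

variable {m : ℕ}

private lemma dcs_nnnorm_entry_le (M : Matrix (Fin m) (Fin m) ℝ) (i j : Fin m) :
    ‖M i j‖₊ ≤ ‖M‖₊ := by
  rw [Matrix.frobenius_nnnorm_def]
  have h1 : ‖M i j‖₊ ^ (2 : ℝ) ≤ ∑ a, ∑ b, ‖M a b‖₊ ^ (2 : ℝ) :=
    le_trans
      (Finset.single_le_sum (f := fun b => ‖M i b‖₊ ^ (2 : ℝ))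
        (fun _ _ => zero_le) (Finset.mem_univ j))
      (Finset.single_le_sum (f := fun a => ∑ b, ‖M a b‖₊ ^ (2 : ℝ))
        (fun _ _ => zero_le) (Finset.mem_univ i))
  calc ‖M i j‖₊ = (‖M i j‖₊ ^ (2 : ℝ)) ^ (1 / 2 : ℝ) := by
        rw [← NNReal.rpow_mul]; norm_num
    _ ≤ (∑ a, ∑ b, ‖M a b‖₊ ^ (2 : ℝ)) ^ (1 / 2 : ℝ) :=
        NNReal.rpow_le_rpow h1 (by norm_num)

private lemma dcs_abs_trace_le (M : Matrix (Fin m) (Fin m) ℝ) :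
    |M.trace| ≤ (m : ℝ) * ‖M‖ := by
  have h : ∀ i : Fin m, |M i i| ≤ ‖M‖ := fun i => dcs_nnnorm_entry_le M i i
  calc |M.trace| = |∑ i, M i i| := rfl
    _ ≤ ∑ i, |M i i| := Finset.abs_sum_le_sum_abs _ _
    _ ≤ ∑ _i : Fin m, ‖M‖ := Finset.sum_le_sum fun i _ => h i
    _ = (m : ℝ) * ‖M‖ := by simp [Finset.sum_const, mul_comm]

private lemma dcs_pow_norm_le (A : Matrix (Fin m) (Fin m) ℝ) {r : ℝ} (hr1 : 1 ≤ r)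
    (hr : specRad A < r) : ∃ C : ℝ, 1 ≤ C ∧ ∀ i : ℕ, ‖A ^ i‖ ≤ C * r ^ i := by
  set B : Matrix (Fin m) (Fin m) ℂ := A.map Complex.ofReal with hB
  have hBpow : ∀ i : ℕ, B ^ i = (A ^ i).map Complex.ofReal := by
    intro i
    have h : B = Complex.ofRealHom.mapMatrix A := rfl
    rw [h, ← map_pow]
    rfl
  have hBnorm : ∀ i : ℕ, ‖A ^ i‖ = ‖B ^ i‖ := by
    intro i
    rw [hBpow i, Matrix.frobenius_norm_map_eq (A ^ i) Complex.ofReal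
      (fun a => Complex.norm_real a)]
  -- spectral radius bound
  have hsp : spectralRadius ℂ B ≤ ENNReal.ofReal (specRad A) := by
    rw [spectralRadius]
    refine iSup₂_le fun k hk => ?_
    have hbdd : BddAbove ((fun z : ℂ => ‖z‖) '' spectrum ℂ B) :=
      ((Matrix.finite_spectrum B).image _).bddAbove
    have habs : ‖k‖ ≤ specRad A := le_csSup hbdd ⟨k, hk, rfl⟩
    rw [← enorm_eq_nnnorm, ← ofReal_norm]
    exact ENNReal.ofReal_le_ofReal habs
  have hlt : spectralRadius ℂ B < ENNReal.ofReal r :=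
    lt_of_le_of_lt hsp
      (by rw [ENNReal.ofReal_lt_ofReal_iff (by linarith)]; exact hr)
  have hev := (spectrum.pow_nnnorm_pow_one_div_tendsto_nhds_spectralRadius
    B).eventually_lt_const hlt
  obtain ⟨N, hN⟩ := eventually_atTop.mp hev
  have key : ∀ i : ℕ, N + 1 ≤ i → ‖B ^ i‖ ≤ r ^ i := by
    intro i hi
    have hipos : 0 < i := lt_of_lt_of_le (Nat.succ_pos N) hi
    have hi0 : (i : ℝ) ≠ 0 := Nat.cast_ne_zero.mpr hipos.ne'
    have h := (hN i (le_trans (Nat.le_succ N) hi)).le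
    have h2 : ((‖B ^ i‖₊ : ℝ≥0∞) ^ (1 / (i : ℝ) : ℝ)) ^ (i : ℝ) ≤
        (ENNReal.ofReal r) ^ (i : ℝ) := ENNReal.rpow_le_rpow h (by positivity)
    rw [← ENNReal.rpow_mul, one_div, inv_mul_cancel₀ hi0, ENNReal.rpow_one] at h2
    have h3 : (‖B ^ i‖₊ : ℝ≥0∞) ≤ ENNReal.ofReal (r ^ i) := by
      rw [ENNReal.ofReal_pow (by linarith : (0:ℝ) ≤ r), ← ENNReal.rpow_natCast]
      exact h2
    rw [← enorm_eq_nnnorm, ← ofReal_norm] at h3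
    exact (ENNReal.ofReal_le_ofReal_iff (by positivity)).mp h3
  have hsum0 : (0 : ℝ) ≤ ∑ j ∈ Finset.range (N + 1), ‖A ^ j‖ :=
    Finset.sum_nonneg fun _ _ => norm_nonneg _
  refine ⟨1 + ∑ j ∈ Finset.range (N + 1), ‖A ^ j‖, by linarith, ?_⟩
  intro i
  have hri : (1 : ℝ) ≤ r ^ i := one_le_pow₀ hr1
  rcases le_or_gt i N with hiN | hiN
  · have h1 : ‖A ^ i‖ ≤ ∑ j ∈ Finset.range (N + 1), ‖A ^ j‖ :=
      Finset.single_le_sum (f := fun j => ‖A ^ j‖) (fun _ _ => norm_nonneg _)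
        (Finset.mem_range.mpr (Nat.lt_succ_of_le hiN))
    nlinarith [norm_nonneg (A ^ i)]
  · have h1 : ‖A ^ i‖ ≤ r ^ i := by rw [hBnorm i]; exact key i hiN
    nlinarith

set_option maxHeartbeats 1000000 in
/-- sufficiency direction of property (20): if `q ∈ (0,1)` and
`q·ρ(A)² < 1`, then `∑_{i=1}^∞ qⁱ Tr(Q·H(i))` converges. -/
theorem discounted_cost_summable_of_lt_one {n : ℕ}
    (A R Q : Matrix (Fin n) (Fin n) ℝ)
    (hR : R.PosSemidef) (hQ : Q.PosSemidef)
    (q : ℝ) (hq : q ∈ Set.Ioo (0 : ℝ) 1)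
    (hstab : q * specRad A ^ 2 < 1) :
    Summable (fun i : ℕ => q ^ (i + 1) * (Q * covH A R (i + 1)).trace) := by
  obtain ⟨hq0, hq1⟩ := hq
  -- choose `r` with `max (specRad A) 1 < r` and `q * r ^ 2 < 1`
  set s : ℝ := max (specRad A) 1 with hs
  have hs1 : (1 : ℝ) ≤ s := le_max_right _ _
  have hs0 : (0 : ℝ) ≤ s := by linarith
  have hsq : q * s ^ 2 < 1 := by
    rcases max_cases (specRad A) 1 with ⟨h, _⟩ | ⟨h, _⟩ <;> rw [hs, h] <;> nlinarith
  have hsinv : s ^ 2 < 1 / q := by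
    rw [lt_div_iff₀ hq0]; linarith [hsq]
  set t : ℝ := (s ^ 2 + 1 / q) / 2 with ht
  have hst : s ^ 2 < t := by rw [ht]; linarith
  have htq : t < 1 / q := by rw [ht]; linarith
  have ht0 : 0 < t := by nlinarith
  set r : ℝ := Real.sqrt t with hrdef
  have hr2 : r ^ 2 = t := Real.sq_sqrt ht0.le
  have hsr : s < r := by
    rw [hrdef, ← Real.lt_sqrt hs0] at *
    exact hst
  have hr1 : (1 : ℝ) ≤ r := le_of_lt (lt_of_le_of_lt hs1 hsr)
  have hr0 : (0 : ℝ) < r := by linarith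
  have hqr : q * r ^ 2 < 1 := by
    rw [hr2]
    calc q * t < q * (1 / q) := by exact mul_lt_mul_of_pos_left htq hq0
      _ = 1 := by field_simp
  have hrspec : specRad A < r := lt_of_le_of_lt (le_max_left _ 1) hsr
  obtain ⟨C, hC1, hC⟩ := dcs_pow_norm_le A hr1 hrspec
  have hC0 : (0 : ℝ) ≤ C := by linarith
  -- bound on the covariance matrix
  have hcov : ∀ d : ℕ, ‖covH A R d‖ ≤ (d : ℝ) * (‖R‖ * C ^ 2 * r ^ (2 * d)) := by
    intro d
    rw [covH]
    calc ‖∑ j ∈ Finset.range d, A ^ j * R * (A ^ j)ᵀ‖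
        ≤ ∑ j ∈ Finset.range d, ‖A ^ j * R * (A ^ j)ᵀ‖ := norm_sum_le _ _
      _ ≤ ∑ _j ∈ Finset.range d, ‖R‖ * C ^ 2 * r ^ (2 * d) := by
          refine Finset.sum_le_sum fun j hj => ?_
          have hjd : j < d := Finset.mem_range.mp hj
          have hAj := hC j
          have hAn : (0 : ℝ) ≤ ‖A ^ j‖ := norm_nonneg _
          have hRn : (0 : ℝ) ≤ ‖R‖ := norm_nonneg _
          have hrj : (0 : ℝ) < r ^ j := by positivity
          calc ‖A ^ j * R * (A ^ j)ᵀ‖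
              ≤ ‖A ^ j * R‖ * ‖(A ^ j)ᵀ‖ := norm_mul_le _ _
            _ ≤ ‖A ^ j‖ * ‖R‖ * ‖(A ^ j)ᵀ‖ :=
                mul_le_mul_of_nonneg_right (norm_mul_le _ _) (norm_nonneg _)
            _ = ‖R‖ * (‖A ^ j‖ * ‖A ^ j‖) := by
                rw [Matrix.frobenius_norm_transpose]; ring
            _ ≤ ‖R‖ * ((C * r ^ j) * (C * r ^ j)) :=
                mul_le_mul_of_nonneg_left
                  (mul_le_mul hAj hAj hAn (by positivity)) hRn
            _ = ‖R‖ * C ^ 2 * r ^ (2 * j) := by ring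
            _ ≤ ‖R‖ * C ^ 2 * r ^ (2 * d) := by
                have h7 : r ^ (2 * j) ≤ r ^ (2 * d) :=
                  pow_le_pow_right₀ hr1 (by omega)
                have h8 : (0 : ℝ) ≤ ‖R‖ * C ^ 2 := by positivity
                exact mul_le_mul_of_nonneg_left h7 h8
      _ = (d : ℝ) * (‖R‖ * C ^ 2 * r ^ (2 * d)) := by
          rw [Finset.sum_const, Finset.card_range, nsmul_eq_mul]
  -- the dominating summable series
  set x : ℝ := q * r ^ 2 with hx
  have hx0 : 0 < x := by positivity
  have hxlt : ‖x‖ < 1 := by rw [Real.norm_eq_abs, abs_of_pos hx0]; exact hqr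
  set K : ℝ := (n : ℝ) * ‖Q‖ * ‖R‖ * C ^ 2 with hK
  have hsumg : Summable (fun i : ℕ => K * (((i : ℝ) + 1) * x ^ (i + 1))) := by
    have h0 : Summable (fun i : ℕ => (i : ℝ) ^ 1 * x ^ i) :=
      summable_pow_mul_geometric_of_norm_lt_one 1 hxlt
    have h1 : Summable (fun i : ℕ => ((i + 1 : ℕ) : ℝ) ^ 1 * x ^ (i + 1)) :=
      (summable_nat_add_iff 1).mpr h0
    refine ((h1.congr ?_).mul_left K)
    intro i
    push_cast
    ring
  refine Summable.of_norm_bounded hsumg ?_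
  intro i
  have hqpow : (0 : ℝ) < q ^ (i + 1) := by positivity
  have htr : |(Q * covH A R (i + 1)).trace| ≤
      (n : ℝ) * (‖Q‖ * ‖covH A R (i + 1)‖) := by
    calc |(Q * covH A R (i + 1)).trace| ≤ (n : ℝ) * ‖Q * covH A R (i + 1)‖ :=
          dcs_abs_trace_le _
      _ ≤ (n : ℝ) * (‖Q‖ * ‖covH A R (i + 1)‖) :=
          mul_le_mul_of_nonneg_left (norm_mul_le _ _) (Nat.cast_nonneg n)
  have hcov' := hcov (i + 1)
  have hQn : (0 : ℝ) ≤ ‖Q‖ := norm_nonneg _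
  have hn0 : (0 : ℝ) ≤ (n : ℝ) := Nat.cast_nonneg n
  calc ‖q ^ (i + 1) * (Q * covH A R (i + 1)).trace‖
      = q ^ (i + 1) * |(Q * covH A R (i + 1)).trace| := by
        rw [Real.norm_eq_abs, abs_mul, abs_pow, abs_of_pos hq0]
    _ ≤ q ^ (i + 1) * ((n : ℝ) * (‖Q‖ * ‖covH A R (i + 1)‖)) :=
        mul_le_mul_of_nonneg_left htr hqpow.le
    _ ≤ q ^ (i + 1) * ((n : ℝ) * (‖Q‖ *
        (((i + 1 : ℕ) : ℝ) * (‖R‖ * C ^ 2 * r ^ (2 * (i + 1)))))) := by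
        refine mul_le_mul_of_nonneg_left
          (mul_le_mul_of_nonneg_left
            (mul_le_mul_of_nonneg_left hcov' hQn) hn0) hqpow.le
    _ = K * (((i : ℝ) + 1) * x ^ (i + 1)) := by
        have hxe : x ^ (i + 1) = q ^ (i + 1) * r ^ (2 * (i + 1)) := by
          rw [hx, mul_pow, ← pow_mul]
        rw [hxe, hK]
        push_cast
        ring

end Aux
end

section
/- Let A, R, Q be n×n real matrices with R and Q positive definite, define H(d) = Σ_{i=0}^{d−1} A^i R (A^i)ᵀ, and let ρ(A) denote the spectral radius of A (the maximum modulus of its complex eigenvalues). Then for any q ∈ (0,1), the series Σ_{i=1}^∞ q^i Tr(Q·H(i)) converges if and only if q·ρ(A)² < 1. -/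
open Matrix

section Aux

attribute [local instance] Matrix.frobeniusSeminormedAddCommGroup
  Matrix.frobeniusNormedAddCommGroup Matrix.frobeniusNormedRing
  Matrix.frobeniusNormedSpace Matrix.frobeniusNormedAlgebra

open scoped MatrixOrder

private lemma frob_sq {n : ℕ} (B : Matrix (Fin n) (Fin n) ℝ) :
    ‖B‖ ^ 2 = ∑ i, ∑ j, (B i j) ^ 2 := by
  have hnn : (0:ℝ) ≤ ∑ i, ∑ j, ‖B i j‖ ^ (2:ℝ) := by positivity
  rw [Matrix.frobenius_norm_def, ← Real.rpow_natCast _ 2, ← Real.rpow_mul hnn]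
  norm_num

private lemma trace_sq {n : ℕ} (B : Matrix (Fin n) (Fin n) ℝ) :
    (B * Bᵀ).trace = ‖B‖ ^ 2 := by
  rw [frob_sq]
  simp [Matrix.trace, Matrix.diag, Matrix.mul_apply, sq]

private lemma summable_discounted_partial_sums {c : ℕ → ℝ} (hc : ∀ i, 0 ≤ c i)
    {q : ℝ} (hq0 : 0 < q) (hq1 : q < 1) :
    (Summable fun i : ℕ => q ^ (i + 1) * ∑ j ∈ Finset.range (i + 1), c j) ↔
      Summable fun i : ℕ => q ^ i * c i := by
  constructor
  · intro h
    have h1 : Summable (fun i : ℕ => q ^ (i + 1) * c i) := by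
      refine h.of_nonneg_of_le (fun i => mul_nonneg (by positivity) (hc i)) (fun i => ?_)
      have h2 : c i ≤ ∑ j ∈ Finset.range (i + 1), c j :=
        Finset.single_le_sum (fun j _ => hc j) (Finset.self_mem_range_succ i)
      have hqp : (0:ℝ) < q ^ (i+1) := by positivity
      nlinarith
    refine (h1.mul_left q⁻¹).congr (fun i => ?_)
    field_simp [pow_succ]
    ring
  · intro h
    have hf : Summable fun k : ℕ => ‖q ^ k * c k‖ :=
      h.abs.congr (fun k => (Real.norm_eq_abs _).symm)
    have hg0 : Summable fun m : ℕ => q ^ (m + 1) :=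
      ((summable_geometric_of_lt_one hq0.le hq1).mul_left q).congr
        (fun m => by rw [pow_succ]; ring)
    have hg : Summable fun m : ℕ => ‖q ^ (m + 1)‖ :=
      hg0.abs.congr (fun k => (Real.norm_eq_abs _).symm)
    have H := summable_norm_sum_mul_range_of_summable_norm hf hg
    refine H.congr (fun i => ?_)
    have he : ∑ k ∈ Finset.range (i + 1), (q ^ k * c k) * q ^ (i - k + 1)
        = q ^ (i + 1) * ∑ j ∈ Finset.range (i + 1), c j := by
      rw [Finset.mul_sum]
      refine Finset.sum_congr rfl fun k hk => ?_
      have hk' : k ≤ i := Nat.lt_succ_iff.mp (Finset.mem_range.mp hk)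
      rw [show i + 1 = k + (i - k + 1) by omega, pow_add]
      ring
    rw [he, Real.norm_of_nonneg]
    exact mul_nonneg (by positivity) (Finset.sum_nonneg fun j _ => hc j)

private lemma map_ofReal_pow {n : ℕ} (A : Matrix (Fin n) (Fin n) ℝ) (k : ℕ) :
    (A.map Complex.ofReal) ^ k = (A ^ k).map Complex.ofReal := by
  induction k with
  | zero => simp [Matrix.map_one Complex.ofReal Complex.ofReal_zero Complex.ofReal_one]
  | succ k ih =>
      rw [pow_succ, pow_succ, ih]
      exact (Matrix.map_mul (f := Complex.ofRealHom)).symm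

/-- The spectral part: summability of `q^i ‖A^i‖²` is equivalent to `q ρ(A)² < 1`. -/
private lemma spectral_summable_iff {n : ℕ} (hn : 0 < n) (A : Matrix (Fin n) (Fin n) ℝ)
    {q : ℝ} (hq0 : 0 < q) (hq1 : q < 1) :
    (Summable fun i : ℕ => q ^ i * ‖A ^ i‖ ^ 2) ↔ q * specRad A ^ 2 < 1 := by
  haveI : Nonempty (Fin n) := Fin.pos_iff_nonempty.mp hn
  set B := A.map Complex.ofReal with hB
  have hnorm : ∀ i : ℕ, ‖A ^ i‖ = ‖B ^ i‖ := fun i => by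
    rw [hB, map_ofReal_pow]
    exact (Matrix.frobenius_norm_map_eq (A ^ i) Complex.ofReal
      (fun a => Complex.norm_real a)).symm
  set ρ := specRad A with hρdef
  have hρ : ρ = sSup ((fun z : ℂ => ‖z‖) '' spectrum ℂ B) := rfl
  have hbdd : BddAbove ((fun z : ℂ => ‖z‖) '' spectrum ℂ B) :=
    ((spectrum.isCompact B).image continuous_norm).bddAbove
  have hub : ∀ z ∈ spectrum ℂ B, ‖z‖ ≤ ρ := fun z hz => by
    rw [hρ]; exact le_csSup hbdd ⟨z, hz, rfl⟩
  have hmem : ∃ z ∈ spectrum ℂ B, ‖z‖ = ρ := by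
    have h := ((spectrum.isCompact B).image continuous_norm).sSup_mem
      ((spectrum.nonempty B).image _)
    rw [← hρ] at h
    obtain ⟨z, hz, hz'⟩ := h
    exact ⟨z, hz, hz'⟩
  have hρ0 : 0 ≤ ρ := by
    obtain ⟨z, hz, hzρ⟩ := hmem
    rw [← hzρ]
    exact norm_nonneg _
  constructor
  · -- Summable → q ρ² < 1
    intro h
    by_contra hcon
    push_neg at hcon
    obtain ⟨z, hz, hzρ⟩ := hmem
    set e := ‖(1 : Matrix (Fin n) (Fin n) ℂ)‖ with hedef
    have he0 : 0 < e := norm_pos_iff.mpr one_ne_zero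
    have hterm : ∀ i : ℕ, 1 / e ^ 2 ≤ q ^ i * ‖A ^ i‖ ^ 2 := by
      intro i
      rw [hnorm i]
      have hzi : z ^ i ∈ spectrum ℂ (B ^ i) :=
        spectrum.pow_image_subset B i ⟨z, hz, rfl⟩
      have hlow : ρ ^ i ≤ ‖B ^ i‖ * e := by
        have h1 := spectrum.norm_le_norm_mul_of_mem hzi
        rwa [norm_pow, hzρ] at h1
      have h3 : (1:ℝ) ≤ (q * ρ ^ 2) ^ i := one_le_pow₀ hcon
      have h4 : (q * ρ ^ 2) ^ i = q ^ i * (ρ ^ i) ^ 2 := by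
        rw [mul_pow, ← pow_mul, ← pow_mul, Nat.mul_comm]
      have h5 : (1:ℝ) ≤ q ^ i * (‖B ^ i‖ * e) ^ 2 := by
        refine le_trans (h4 ▸ h3) ?_
        have h6 : (ρ ^ i) ^ 2 ≤ (‖B ^ i‖ * e) ^ 2 :=
          pow_le_pow_left₀ (by positivity) hlow 2
        nlinarith [pow_pos hq0 i]
      rw [div_le_iff₀ (by positivity : (0:ℝ) < e ^ 2)]
      nlinarith [h5, sq_nonneg (‖B ^ i‖), pow_pos hq0 i]
    have hev := h.tendsto_atTop_zero.eventually_lt_const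
      (show (0:ℝ) < 1 / e ^ 2 by positivity)
    obtain ⟨i, hi⟩ := hev.exists
    exact absurd (hterm i) (not_le.mpr hi)
  · -- q ρ² < 1 → Summable
    intro h
    set m := (ρ ^ 2 + 1 / q) / 2 with hm
    have hm1 : ρ ^ 2 < m := by
      rw [hm]
      have : ρ ^ 2 < 1 / q := by
        rw [lt_div_iff₀ hq0]; nlinarith
      linarith
    have hm2 : m < 1 / q := by
      rw [hm]
      have : ρ ^ 2 < 1 / q := by
        rw [lt_div_iff₀ hq0]; nlinarith
      linarith
    have hm0 : 0 < m := lt_of_le_of_lt (by positivity) hm1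
    set s := Real.sqrt m with hs
    have hs0 : 0 < s := Real.sqrt_pos.mpr hm0
    have hs2 : s ^ 2 = m := Real.sq_sqrt hm0.le
    have hρs : ρ < s := by nlinarith
    have hsr : spectralRadius ℂ B ≤ ENNReal.ofReal ρ := by
      rw [spectralRadius]
      refine iSup₂_le fun k hk => ?_
      rw [← ENNReal.ofReal_coe_nnreal, coe_nnnorm]
      exact ENNReal.ofReal_le_ofReal (hub k hk)
    have hlt : spectralRadius ℂ B < ENNReal.ofReal s :=
      hsr.trans_lt ((ENNReal.ofReal_lt_ofReal_iff hs0).mpr hρs)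
    have hev := (spectrum.pow_nnnorm_pow_one_div_tendsto_nhds_spectralRadius B).eventually_lt_const hlt
    obtain ⟨N, hN⟩ := Filter.eventually_atTop.mp hev
    rw [← summable_nat_add_iff (N + 1)]
    have hqm0 : (0:ℝ) ≤ q * m := by positivity
    have hqm1 : q * m < 1 := by
      have := (lt_div_iff₀ hq0).mp hm2
      linarith [this]
    have hgeo : Summable (fun i : ℕ => (q * m) ^ (i + (N + 1))) := by
      refine ((summable_geometric_of_lt_one hqm0 hqm1).mul_left ((q * m) ^ (N + 1))).congr
        (fun i => ?_)
      rw [← pow_add, Nat.add_comm]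
    refine hgeo.of_nonneg_of_le (fun i => by positivity) (fun i => ?_)
    set j := i + (N + 1) with hj
    have hj1 : 1 ≤ j := by omega
    have hjN : N ≤ j := by omega
    have hb : ‖B ^ j‖ ≤ s ^ j := by
      have hx : ((‖B ^ j‖₊ : ENNReal) ^ (1 / (j:ℝ))) ^ (j:ℝ) ≤ (ENNReal.ofReal s) ^ (j:ℝ) :=
        ENNReal.rpow_le_rpow (hN j hjN).le (Nat.cast_nonneg j)
      rw [← ENNReal.rpow_mul,
        one_div_mul_cancel (by exact_mod_cast Nat.one_le_iff_ne_zero.mp hj1 : (j:ℝ) ≠ 0),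
        ENNReal.rpow_one] at hx
      rw [ENNReal.ofReal_rpow_of_pos hs0, Real.rpow_natCast] at hx
      rw [← ENNReal.ofReal_coe_nnreal, coe_nnnorm] at hx
      exact (ENNReal.ofReal_le_ofReal_iff (by positivity)).mp hx
    calc q ^ j * ‖A ^ j‖ ^ 2 = q ^ j * ‖B ^ j‖ ^ 2 := by rw [hnorm]
      _ ≤ q ^ j * (s ^ j) ^ 2 := by
          have := pow_le_pow_left₀ (norm_nonneg (B ^ j)) hb 2
          nlinarith [pow_pos hq0 j]
      _ = (q * m) ^ j := by
          rw [← pow_mul, Nat.mul_comm, pow_mul, hs2, mul_pow]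

/-- property (20) of the paper: for `R, Q` positive definite and
`q ∈ (0,1)`, the series `∑_{i=1}^∞ qⁱ Tr(Q·H(i))` converges iff `q·ρ(A)² < 1`. -/
theorem discounted_cost_summable_iff {n : ℕ}
    (A R Q : Matrix (Fin n) (Fin n) ℝ)
    (hR : R.PosDef) (hQ : Q.PosDef)
    (q : ℝ) (hq : q ∈ Set.Ioo (0 : ℝ) 1) :
    Summable (fun i : ℕ => q ^ (i + 1) * (Q * covH A R (i + 1)).trace) ↔
      q * specRad A ^ 2 < 1 := by
  obtain ⟨hq0, hq1⟩ := hq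
  rcases Nat.eq_zero_or_pos n with hn | hn
  · subst hn
    have hzero : ∀ i : ℕ, (Q * covH A R (i + 1)).trace = 0 := fun i => by
      simp [Matrix.trace]
    have hspec : specRad A = 0 := by
      have hs : spectrum ℂ (A.map Complex.ofReal) = ∅ := by
        ext z
        simp [spectrum.mem_iff, isUnit_of_subsingleton]
      rw [specRad, hs, Set.image_empty, Real.sSup_empty]
    simp only [hzero, mul_zero, hspec]
    constructor
    · intro _; norm_num
    · intro _; exact summable_zero
  · haveI : Nonempty (Fin n) := Fin.pos_iff_nonempty.mp hn
    set S := CFC.sqrt Q with hSdef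
    set T := CFC.sqrt R with hTdef
    have hS : Sᵀ = S := by
      have h := (CFC.sqrt_nonneg Q).posSemidef.1
      rwa [Matrix.IsHermitian, Matrix.conjTranspose_eq_transpose_of_trivial] at h
    have hT : Tᵀ = T := by
      have h := (CFC.sqrt_nonneg R).posSemidef.1
      rwa [Matrix.IsHermitian, Matrix.conjTranspose_eq_transpose_of_trivial] at h
    have hQS : S * S = Q := CFC.sqrt_mul_sqrt_self Q hQ.posSemidef.nonneg
    have hRT : T * T = R := CFC.sqrt_mul_sqrt_self R hR.posSemidef.nonneg
    have hSdet : IsUnit S.det := by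
      have h1 : Q.det ≠ 0 := ne_of_gt hQ.det_pos
      have h2 : S.det * S.det = Q.det := by rw [← Matrix.det_mul, hQS]
      exact isUnit_iff_ne_zero.mpr fun h => h1 (by rw [← h2, h, mul_zero])
    have hTdet : IsUnit T.det := by
      have h1 : R.det ≠ 0 := ne_of_gt hR.det_pos
      have h2 : T.det * T.det = R.det := by rw [← Matrix.det_mul, hRT]
      exact isUnit_iff_ne_zero.mpr fun h => h1 (by rw [← h2, h, mul_zero])
    set c : ℕ → ℝ := fun i => (Q * (A ^ i * R * (A ^ i)ᵀ)).trace with hcdef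
    have hckey : ∀ i : ℕ, c i = ‖S * A ^ i * T‖ ^ 2 := by
      intro i
      have h1 : (Q * (A ^ i * R * (A ^ i)ᵀ)).trace
          = ((S * A ^ i * T) * (S * A ^ i * T)ᵀ).trace := by
        rw [← hQS, ← hRT]
        rw [Matrix.transpose_mul, Matrix.transpose_mul, hS, hT]
        rw [show (S * S) * (A ^ i * (T * T) * (A ^ i)ᵀ)
            = S * (S * A ^ i * T * (T * (A ^ i)ᵀ)) by simp only [Matrix.mul_assoc]]
        rw [Matrix.trace_mul_comm]
        simp only [Matrix.mul_assoc]
      show (Q * (A ^ i * R * (A ^ i)ᵀ)).trace = _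
      rw [h1, trace_sq]
    have hc0 : ∀ i, 0 ≤ c i := fun i => by rw [hckey]; positivity
    have htr : ∀ i : ℕ, (Q * covH A R (i + 1)).trace = ∑ j ∈ Finset.range (i + 1), c j := by
      intro i
      rw [covH, Finset.mul_sum, Matrix.trace_sum]
    have hstep1 : (Summable fun i : ℕ => q ^ (i + 1) * (Q * covH A R (i + 1)).trace)
        ↔ Summable fun i : ℕ => q ^ i * c i := by
      rw [show (fun i : ℕ => q ^ (i + 1) * (Q * covH A R (i + 1)).trace)
          = fun i : ℕ => q ^ (i + 1) * ∑ j ∈ Finset.range (i + 1), c j from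
        funext fun i => by rw [htr]]
      exact summable_discounted_partial_sums hc0 hq0 hq1
    -- comparison between c i and ‖A^i‖²
    have hKub : ∀ X : Matrix (Fin n) (Fin n) ℝ, ‖S * X * T‖ ≤ (‖S‖ * ‖T‖) * ‖X‖ := by
      intro X
      calc ‖S * X * T‖ ≤ ‖S * X‖ * ‖T‖ := norm_mul_le _ _
        _ ≤ (‖S‖ * ‖X‖) * ‖T‖ := by
            have := norm_mul_le S X
            nlinarith [norm_nonneg T, norm_nonneg (S * X)]
        _ = (‖S‖ * ‖T‖) * ‖X‖ := by ring
    have hKlb : ∀ X : Matrix (Fin n) (Fin n) ℝ, ‖X‖ ≤ (‖S⁻¹‖ * ‖T⁻¹‖) * ‖S * X * T‖ := by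
      intro X
      have hX : S⁻¹ * (S * X * T) * T⁻¹ = X := by
        rw [show S * X * T = S * (X * T) by rw [Matrix.mul_assoc],
          Matrix.nonsing_inv_mul_cancel_left _ _ hSdet,
          Matrix.mul_nonsing_inv_cancel_right _ _ hTdet]
      calc ‖X‖ = ‖S⁻¹ * (S * X * T) * T⁻¹‖ := by rw [hX]
        _ ≤ ‖S⁻¹ * (S * X * T)‖ * ‖T⁻¹‖ := norm_mul_le _ _
        _ ≤ (‖S⁻¹‖ * ‖S * X * T‖) * ‖T⁻¹‖ := by
            have := norm_mul_le S⁻¹ (S * X * T)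
            nlinarith [norm_nonneg (T⁻¹ : Matrix (Fin n) (Fin n) ℝ),
              norm_nonneg (S⁻¹ * (S * X * T))]
        _ = (‖S⁻¹‖ * ‖T⁻¹‖) * ‖S * X * T‖ := by ring
    have hstep2 : (Summable fun i : ℕ => q ^ i * c i)
        ↔ Summable fun i : ℕ => q ^ i * ‖A ^ i‖ ^ 2 := by
      constructor
      · intro h
        refine (h.mul_left ((‖S⁻¹‖ * ‖T⁻¹‖) ^ 2)).of_nonneg_of_le
          (fun i => by positivity) (fun i => ?_)
        have h1 := hKlb (A ^ i)
        have h2 : ‖A ^ i‖ ^ 2 ≤ ((‖S⁻¹‖ * ‖T⁻¹‖) * ‖S * A ^ i * T‖) ^ 2 :=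
          pow_le_pow_left₀ (norm_nonneg _) h1 2
        rw [hckey]
        have hqp : (0:ℝ) ≤ q ^ i := by positivity
        calc q ^ i * ‖A ^ i‖ ^ 2
            ≤ q ^ i * (((‖S⁻¹‖ * ‖T⁻¹‖) * ‖S * A ^ i * T‖) ^ 2) := by nlinarith
          _ = (‖S⁻¹‖ * ‖T⁻¹‖) ^ 2 * (q ^ i * ‖S * A ^ i * T‖ ^ 2) := by ring
      · intro h
        refine (h.mul_left ((‖S‖ * ‖T‖) ^ 2)).of_nonneg_of_le
          (fun i => mul_nonneg (by positivity) (hc0 i)) (fun i => ?_)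
        have h1 := hKub (A ^ i)
        have h2 : ‖S * A ^ i * T‖ ^ 2 ≤ ((‖S‖ * ‖T‖) * ‖A ^ i‖) ^ 2 :=
          pow_le_pow_left₀ (norm_nonneg _) h1 2
        rw [hckey]
        have hqp : (0:ℝ) ≤ q ^ i := by positivity
        calc q ^ i * ‖S * A ^ i * T‖ ^ 2
            ≤ q ^ i * (((‖S‖ * ‖T‖) * ‖A ^ i‖) ^ 2) := by nlinarith
          _ = (‖S‖ * ‖T‖) ^ 2 * (q ^ i * ‖A ^ i‖ ^ 2) := by ring
    rw [hstep1, hstep2]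
    exact spectral_summable_iff hn A hq0 hq1

end Aux
end

section
/- Let A, R, Q be n×n real matrices with R and Q positive definite, define H(d) = Σ_{i=0}^{d−1} A^i R (A^i)ᵀ, and let ρ(A) denote the spectral radius of A (the maximum modulus of its complex eigenvalues). Then for any g ∈ (0,1) and any natural number l₀ ≥ 1, the series Σ_{i=1}^∞ g^i Tr(Q·H(i·l₀)) converges if and only if g·ρ(A)^{2l₀} < 1. -/
open Matrix

attribute [local instance] Matrix.frobeniusSeminormedAddCommGroup
  Matrix.frobeniusNormedAddCommGroup Matrix.frobeniusNormedSpace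
  Matrix.frobeniusNormedRing Matrix.frobeniusNormedAlgebra

lemma specRad_spec {n : ℕ} (hn : 0 < n) (A : Matrix (Fin n) (Fin n) ℝ) :
    ∃ μ : ℂ, μ ∈ spectrum ℂ (A.map Complex.ofReal) ∧ ‖μ‖ = specRad A ∧
      (∀ ν ∈ spectrum ℂ (A.map Complex.ofReal), ‖ν‖ ≤ specRad A) ∧
      spectralRadius ℂ (A.map Complex.ofReal) = ENNReal.ofReal (specRad A) := by
  haveI : Nonempty (Fin n) := ⟨⟨0, hn⟩⟩
  set B := A.map Complex.ofReal
  have h1 : (spectrum ℂ B).Nonempty := spectrum.nonempty B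
  have h2 : IsCompact ((fun z : ℂ => ‖z‖) '' spectrum ℂ B) :=
    (spectrum.isCompact B).image continuous_norm
  obtain ⟨m, hm⟩ := h2.exists_isGreatest (h1.image _)
  have hsup : sSup ((fun z : ℂ => ‖z‖) '' spectrum ℂ B) = m := hm.csSup_eq
  obtain ⟨μ, hμ, hμm⟩ := hm.1
  beta_reduce at hμm
  refine ⟨μ, hμ, by rw [specRad, hsup, hμm], ?_, ?_⟩
  · intro ν hν
    rw [specRad, hsup]
    exact hm.2 ⟨ν, hν, rfl⟩
  · have hρ : specRad A = ‖μ‖ := by rw [specRad, hsup, hμm]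
    rw [hρ]
    apply le_antisymm
    · refine iSup₂_le fun k hk => ?_
      have : ‖k‖ ≤ ‖μ‖ := by simpa [hμm] using hm.2 ⟨k, hk, rfl⟩
      calc (‖k‖₊ : ENNReal) ≤ (‖μ‖₊ : ENNReal) := by exact_mod_cast this
        _ = ENNReal.ofReal ‖μ‖ := by
          exact (ofReal_norm μ).symm
    · have : ENNReal.ofReal ‖μ‖ = (‖μ‖₊ : ENNReal) := by
        exact ofReal_norm μ
      rw [this]
      exact le_iSup₂ (f := fun k (_ : k ∈ spectrum ℂ B) => (‖k‖₊ : ENNReal)) μ hμ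

-- lower bound: ρ^k ≤ ‖B^k‖ * ‖1‖
lemma pow_le_norm_pow {n : ℕ} (hn : 0 < n) (A : Matrix (Fin n) (Fin n) ℝ) (k : ℕ) :
    specRad A ^ k ≤ ‖(A.map Complex.ofReal) ^ k‖ * ‖(1 : Matrix (Fin n) (Fin n) ℂ)‖ := by
  haveI : Nonempty (Fin n) := ⟨⟨0, hn⟩⟩
  obtain ⟨μ, hμ, hμρ, _, _⟩ := specRad_spec hn A
  set B := A.map Complex.ofReal
  have pow_mem : μ ^ k ∈ spectrum ℂ (B ^ k) := by
    simpa only [one_mul, Algebra.algebraMap_eq_smul_one, one_smul, Polynomial.aeval_monomial,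
      Polynomial.eval_monomial] using
      spectrum.subset_polynomial_aeval B (Polynomial.monomial k (1 : ℂ)) ⟨μ, hμ, rfl⟩
  have := spectrum.norm_le_norm_mul_of_mem pow_mem
  calc specRad A ^ k = ‖μ ^ k‖ := by rw [norm_pow, hμρ]
    _ ≤ _ := by exact this

-- upper bound via Gelfand
lemma exists_norm_pow_le {n : ℕ} (hn : 0 < n) (A : Matrix (Fin n) (Fin n) ℝ) {r : ℝ}
    (hr : specRad A < r) :
    ∃ C : ℝ, 0 < C ∧ ∀ k : ℕ, ‖(A.map Complex.ofReal) ^ k‖ ≤ C * r ^ k := by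
  haveI : Nonempty (Fin n) := ⟨⟨0, hn⟩⟩
  obtain ⟨μ, hμ, hμρ, _, hsr⟩ := specRad_spec hn A
  set B := A.map Complex.ofReal
  have hρ0 : 0 ≤ specRad A := hμρ ▸ norm_nonneg μ
  have hr0 : 0 < r := lt_of_le_of_lt hρ0 hr
  have hten := spectrum.pow_norm_pow_one_div_tendsto_nhds_spectralRadius B
  rw [hsr] at hten
  have hev : ∀ᶠ k : ℕ in Filter.atTop,
      ENNReal.ofReal (‖B ^ k‖ ^ (1 / (k:ℝ))) < ENNReal.ofReal r :=
    hten.eventually_lt_const (by exact_mod_cast (ENNReal.ofReal_lt_ofReal_iff hr0).2 hr)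
  obtain ⟨N, hN⟩ := Filter.eventually_atTop.1 hev
  have hbd : ∀ k, k ≥ N + 1 → ‖B ^ k‖ ≤ r ^ k := by
    intro k hk
    have hk0 : (0:ℝ) < (k:ℝ) := by exact_mod_cast Nat.lt_of_lt_of_le (Nat.succ_pos N) hk
    have h1 := (ENNReal.ofReal_lt_ofReal_iff hr0).1 (hN k (le_trans (Nat.le_succ N) hk))
    have h2 : ‖B ^ k‖ = (‖B ^ k‖ ^ (1 / (k:ℝ))) ^ k := by
      rw [← Real.rpow_natCast (‖B ^ k‖ ^ (1 / (k:ℝ))) k, ← Real.rpow_mul (norm_nonneg _),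
        one_div, inv_mul_cancel₀ hk0.ne', Real.rpow_one]
    rw [h2]
    exact pow_le_pow_left₀ (Real.rpow_nonneg (norm_nonneg _) _) h1.le k
  obtain ⟨C0, hC0⟩ := Finset.exists_le ((Finset.range (N+1)).image fun k => ‖B ^ k‖ / r ^ k)
  refine ⟨max C0 1, lt_of_lt_of_le one_pos (le_max_right _ _), fun k => ?_⟩
  rcases le_or_gt k N with hkN | hkN
  · have hmem : ‖B ^ k‖ / r ^ k ∈ (Finset.range (N+1)).image fun k => ‖B ^ k‖ / r ^ k :=
      Finset.mem_image_of_mem _ (Finset.mem_range.2 (Nat.lt_succ_of_le hkN))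
    have := hC0 _ hmem
    have hrk : (0:ℝ) < r ^ k := by positivity
    calc ‖B ^ k‖ = (‖B ^ k‖ / r ^ k) * r ^ k := by field_simp
      _ ≤ C0 * r ^ k := by nlinarith
      _ ≤ max C0 1 * r ^ k := by nlinarith [le_max_left C0 1]
  · have := hbd k hkN
    nlinarith [pow_pos hr0 k, le_max_right C0 1, le_max_left C0 1]

open scoped MatrixOrder in
lemma posdef_sqrt_facts {n : ℕ} {Q : Matrix (Fin n) (Fin n) ℝ} (hQ : Q.PosDef) :
    ∃ S Si : Matrix (Fin n) (Fin n) ℝ, Sᵀ = S ∧ S * S = Q ∧ Si * S = 1 ∧ S * Si = 1 := by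
  have hps := hQ.posSemidef
  refine ⟨CFC.sqrt Q, (CFC.sqrt Q)⁻¹, ?_, CFC.sqrt_mul_sqrt_self Q hps.nonneg, ?_, ?_⟩
  · rw [← Matrix.conjTranspose_eq_transpose_of_trivial]
    exact (CFC.sqrt_nonneg Q).posSemidef.isHermitian
  all_goals {
    have hdet : (CFC.sqrt Q).det ≠ 0 := by
      intro h
      have := hQ.det_pos
      rw [← CFC.sqrt_mul_sqrt_self Q hps.nonneg, Matrix.det_mul, h, mul_zero] at this
      exact lt_irrefl _ this
    first
      | exact Matrix.nonsing_inv_mul _ (isUnit_iff_ne_zero.2 hdet)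
      | exact Matrix.mul_nonsing_inv _ (isUnit_iff_ne_zero.2 hdet) }

lemma trace_mul_transpose_eq_sq {n : ℕ} (X : Matrix (Fin n) (Fin n) ℝ) :
    (X * Xᵀ).trace = ‖X.map Complex.ofReal‖ ^ 2 := by
  have hs : (0:ℝ) ≤ ∑ i, ∑ j, X i j ^ 2 := by positivity
  have h : ‖X.map Complex.ofReal‖ = (∑ i, ∑ j, X i j ^ 2) ^ (1/2 : ℝ) := by
    rw [Matrix.frobenius_norm_def]
    congr 1
    refine Finset.sum_congr rfl fun i _ => Finset.sum_congr rfl fun j _ => ?_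
    rw [Matrix.map_apply, Complex.norm_real, Real.rpow_two, Real.norm_eq_abs, sq_abs]
  rw [h, ← Real.rpow_natCast _ 2, ← Real.rpow_mul hs]
  norm_num
  simp [Matrix.trace, Matrix.mul_apply, Matrix.transpose_apply, sq, Matrix.diag]

lemma mapC_mul {n : ℕ} (X Y : Matrix (Fin n) (Fin n) ℝ) :
    (X * Y).map Complex.ofReal = X.map Complex.ofReal * Y.map Complex.ofReal := by
  ext i j
  simp [Matrix.mul_apply, Matrix.map_apply]

lemma mapC_pow {n : ℕ} (X : Matrix (Fin n) (Fin n) ℝ) (k : ℕ) :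
    (X ^ k).map Complex.ofReal = (X.map Complex.ofReal) ^ k := by
  induction k with
  | zero => simp [Matrix.map_one Complex.ofReal Complex.ofReal_zero Complex.ofReal_one]
  | succ k ih => rw [pow_succ, pow_succ, mapC_mul, ih]

set_option maxHeartbeats 1000000 in
lemma trace_bounds {n : ℕ} (hn : 0 < n) (A R Q : Matrix (Fin n) (Fin n) ℝ)
    (hR : R.PosDef) (hQ : Q.PosDef) :
    ∃ c₁ c₂ : ℝ, 0 < c₁ ∧ 0 < c₂ ∧ ∀ j : ℕ,
      c₁ * ‖(A.map Complex.ofReal) ^ j‖ ^ 2 ≤ (Q * (A ^ j * R * (A ^ j)ᵀ)).trace ∧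
      (Q * (A ^ j * R * (A ^ j)ᵀ)).trace ≤ c₂ * ‖(A.map Complex.ofReal) ^ j‖ ^ 2 := by
  haveI : Nonempty (Fin n) := ⟨⟨0, hn⟩⟩
  obtain ⟨S, Si, hSt, hSS, hSiS, hSSi⟩ := posdef_sqrt_facts hQ
  obtain ⟨U, Ui, hUt, hUU, hUiU, hUUi⟩ := posdef_sqrt_facts hR
  set C : ℝ → ℂ := Complex.ofReal
  have hone : (1 : Matrix (Fin n) (Fin n) ℂ) ≠ 0 := one_ne_zero
  -- trace identity
  have htr : ∀ M : Matrix (Fin n) (Fin n) ℝ,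
      (Q * (M * R * Mᵀ)).trace = ((S * M * U) * (S * M * U)ᵀ).trace := by
    intro M
    have h1 : (S * M * U)ᵀ = U * Mᵀ * S := by
      rw [Matrix.transpose_mul, Matrix.transpose_mul, hSt, hUt, mul_assoc]
    calc (Q * (M * R * Mᵀ)).trace = (S * (S * M * (U * U) * Mᵀ)).trace := by
          rw [← hSS, ← hUU]; congr 1; simp only [mul_assoc]
      _ = ((S * M * (U * U) * Mᵀ) * S).trace := (Matrix.trace_mul_comm _ _).symm
      _ = ((S * M * U) * (S * M * U)ᵀ).trace := by
          rw [h1]; congr 1; simp only [mul_assoc]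
  -- nonzero-ness of relevant complex matrices
  have hne : ∀ X Y : Matrix (Fin n) (Fin n) ℝ, X * Y = 1 → (X.map C) ≠ 0 := by
    intro X Y hXY h
    apply hone
    have : (X.map C) * (Y.map C) = 1 := by
      rw [← mapC_mul, hXY]
      exact Matrix.map_one Complex.ofReal Complex.ofReal_zero Complex.ofReal_one
    rw [h, zero_mul] at this
    exact this.symm
  have hSipos : 0 < ‖Si.map C‖ := norm_pos_iff.2 (hne Si S hSiS)
  have hUipos : 0 < ‖Ui.map C‖ := norm_pos_iff.2 (hne Ui U hUiU)
  have hSpos : 0 < ‖S.map C‖ := norm_pos_iff.2 (hne S Si hSSi)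
  have hUpos : 0 < ‖U.map C‖ := norm_pos_iff.2 (hne U Ui hUUi)
  set a : ℝ := ‖Si.map C‖ * ‖Ui.map C‖ with ha
  set b : ℝ := ‖S.map C‖ * ‖U.map C‖ with hb
  have hapos : 0 < a := mul_pos hSipos hUipos
  have hbpos : 0 < b := mul_pos hSpos hUpos
  refine ⟨(a ^ 2)⁻¹, b ^ 2, by positivity, by positivity, fun j => ?_⟩
  set M : Matrix (Fin n) (Fin n) ℝ := A ^ j with hM
  have hMC : (M.map C) = (A.map Complex.ofReal) ^ j := mapC_pow A j
  have ht : (Q * (M * R * Mᵀ)).trace = ‖(S * M * U).map C‖ ^ 2 := by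
    rw [htr M, trace_mul_transpose_eq_sq]
  have hmapSMU : (S * M * U).map C = S.map C * M.map C * U.map C := by
    rw [mapC_mul, mapC_mul]
  -- upper bound
  have hup : ‖(S * M * U).map C‖ ≤ b * ‖M.map C‖ := by
    rw [hmapSMU, hb]
    calc ‖S.map C * M.map C * U.map C‖ ≤ ‖S.map C * M.map C‖ * ‖U.map C‖ := norm_mul_le _ _
      _ ≤ ‖S.map C‖ * ‖M.map C‖ * ‖U.map C‖ := by
          have := norm_mul_le (S.map C) (M.map C)
          nlinarith [norm_nonneg (U.map C)]
      _ = ‖S.map C‖ * ‖U.map C‖ * ‖M.map C‖ := by ring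
  -- lower bound
  have hlow : ‖M.map C‖ ≤ a * ‖(S * M * U).map C‖ := by
    have hfact : (M.map C) = (Si.map C) * ((S * M * U).map C) * (Ui.map C) := by
      rw [hmapSMU]
      have h1 : Si.map C * (S.map C * M.map C * U.map C) * Ui.map C =
          (Si.map C * S.map C) * M.map C * (U.map C * Ui.map C) := by
        simp only [mul_assoc]
      rw [h1]
      have h2 : Si.map C * S.map C = 1 := by
        rw [← mapC_mul, hSiS]
        exact Matrix.map_one Complex.ofReal Complex.ofReal_zero Complex.ofReal_one
      have h3 : U.map C * Ui.map C = 1 := by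
        rw [← mapC_mul, hUUi]
        exact Matrix.map_one Complex.ofReal Complex.ofReal_zero Complex.ofReal_one
      rw [h2, h3, one_mul, mul_one]
    calc ‖M.map C‖ = ‖(Si.map C) * ((S * M * U).map C) * (Ui.map C)‖ := by rw [← hfact]
      _ ≤ ‖(Si.map C) * ((S * M * U).map C)‖ * ‖Ui.map C‖ := norm_mul_le _ _
      _ ≤ ‖Si.map C‖ * ‖(S * M * U).map C‖ * ‖Ui.map C‖ := by
          have := norm_mul_le (Si.map C) ((S * M * U).map C)
          nlinarith [norm_nonneg (Ui.map C)]
      _ = a * ‖(S * M * U).map C‖ := by rw [ha]; ring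
  constructor
  · rw [← hMC, ht, inv_mul_le_iff₀ (by positivity)]
    calc ‖M.map C‖ ^ 2 ≤ (a * ‖(S * M * U).map C‖) ^ 2 :=
          pow_le_pow_left₀ (norm_nonneg _) hlow 2
      _ = a ^ 2 * ‖(S * M * U).map C‖ ^ 2 := by rw [mul_pow]
  · rw [← hMC, ht]
    calc ‖(S * M * U).map C‖ ^ 2 ≤ (b * ‖M.map C‖) ^ 2 :=
          pow_le_pow_left₀ (norm_nonneg _) hup 2
      _ = b ^ 2 * ‖M.map C‖ ^ 2 := by rw [mul_pow]


set_option maxHeartbeats 1000000 in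
/-- subsampled convergence criterion: for `R, Q` positive definite,
`g ∈ (0,1)` and `l₀ ≥ 1`, the series `∑_{i=1}^∞ gⁱ Tr(Q·H(i·l₀))` converges iff
`g·ρ(A)^(2l₀) < 1`. -/
theorem subsampled_discounted_cost_summable_iff {n : ℕ}
    (A R Q : Matrix (Fin n) (Fin n) ℝ)
    (hR : R.PosDef) (hQ : Q.PosDef)
    (g : ℝ) (hg : g ∈ Set.Ioo (0 : ℝ) 1) (l₀ : ℕ) (hl₀ : 1 ≤ l₀) :
    Summable (fun i : ℕ => g ^ (i + 1) * (Q * covH A R ((i + 1) * l₀)).trace) ↔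
      g * specRad A ^ (2 * l₀) < 1 := by
  obtain ⟨hg0, hg1⟩ := hg
  rcases Nat.eq_zero_or_pos n with hn | hn
  · -- trivial case n = 0
    subst hn
    have hspec : spectrum ℂ (A.map Complex.ofReal) = ∅ := by
      rw [Set.eq_empty_iff_forall_notMem]
      intro k hk
      exact (spectrum.mem_iff.1 hk) (isUnit_of_subsingleton _)
    have hρ : specRad A = 0 := by rw [specRad, hspec]; simp [Real.sSup_empty]
    have htr : ∀ d, (Q * covH A R d).trace = 0 := fun d => by simp [Matrix.trace]
    constructor
    · intro _
      rw [hρ, zero_pow (by omega : 2 * l₀ ≠ 0), mul_zero]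
      exact zero_lt_one
    · intro _
      have hfe : (fun i : ℕ => g ^ (i + 1) * (Q * covH A R ((i + 1) * l₀)).trace)
          = fun _ => (0:ℝ) := by
        funext i; rw [htr, mul_zero]
      rw [hfe]; exact summable_zero
  -- main case
  haveI : Nonempty (Fin n) := ⟨⟨0, hn⟩⟩
  set ρ := specRad A with hρdef
  set B := A.map Complex.ofReal with hBdef
  obtain ⟨μ, hμmem, hμρ, hμmax, hsrad⟩ := specRad_spec hn A
  have hρ0 : 0 ≤ ρ := by rw [hρdef, ← hμρ]; exact norm_nonneg μ
  obtain ⟨c₁, c₂, hc₁, hc₂, hcb⟩ := trace_bounds hn A R Q hR hQ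
  set t : ℕ → ℝ := fun j => (Q * (A ^ j * R * (A ^ j)ᵀ)).trace with htdef
  have htnn : ∀ j, 0 ≤ t j := fun j => le_trans (by positivity) (hcb j).1
  have htrace : ∀ d, (Q * covH A R d).trace = ∑ j ∈ Finset.range d, t j := by
    intro d
    rw [covH, Finset.mul_sum, Matrix.trace_sum]
  have hτnn : ∀ d, 0 ≤ (Q * covH A R d).trace := fun d => by
    rw [htrace]; exact Finset.sum_nonneg fun j _ => htnn j
  set K := ‖(1 : Matrix (Fin n) (Fin n) ℂ)‖ with hKdef
  have hK : 0 < K := norm_pos_iff.2 one_ne_zero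
  constructor
  · -- summable → criterion
    intro hsum
    by_contra hge
    push_neg at hge
    have hρgt1 : 1 < ρ := by
      have h1 : 1 < ρ ^ (2 * l₀) := by nlinarith [pow_nonneg hρ0 (2 * l₀)]
      exact (one_lt_pow_iff_of_nonneg hρ0 (by omega)).1 h1
    have hρpos : (0:ℝ) < ρ := lt_trans one_pos hρgt1
    set ε : ℝ := c₁ / (K ^ 2 * ρ ^ 2) with hεdef
    have hε : 0 < ε := by positivity
    have hlb : ∀ i : ℕ, ε ≤ g ^ (i + 1) * (Q * covH A R ((i + 1) * l₀)).trace := by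
      intro i
      set d := (i + 1) * l₀ with hddef
      have hd1 : 1 ≤ d := Nat.mul_le_mul (Nat.succ_le_succ (Nat.zero_le i)) hl₀
      obtain ⟨e, he⟩ : ∃ e, d = e + 1 := ⟨d - 1, (Nat.succ_pred_eq_of_pos hd1).symm⟩
      have hT1 : t e ≤ (Q * covH A R d).trace := by
        rw [htrace]
        exact Finset.single_le_sum (fun j _ => htnn j)
          (Finset.mem_range.2 (by omega))
      have hA1 : c₁ * ‖B ^ e‖ ^ 2 ≤ (Q * covH A R d).trace := le_trans (hcb e).1 hT1
      have hA2 : ρ ^ (2 * e) ≤ ‖B ^ e‖ ^ 2 * K ^ 2 := by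
        have h := pow_le_norm_pow hn A e
        rw [← hBdef] at h
        have hpnn : 0 ≤ ρ ^ e := pow_nonneg hρ0 e
        calc ρ ^ (2 * e) = ρ ^ e * ρ ^ e := by rw [two_mul, pow_add]
          _ ≤ (‖B ^ e‖ * K) * (‖B ^ e‖ * K) := by nlinarith [norm_nonneg (B ^ e)]
          _ = ‖B ^ e‖ ^ 2 * K ^ 2 := by ring
      have hA3 : 1 ≤ g ^ (i + 1) * ρ ^ (2 * e) * ρ ^ 2 := by
        have hexp : g ^ (i + 1) * ρ ^ (2 * e) * ρ ^ 2 = (g * ρ ^ (2 * l₀)) ^ (i + 1) := by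
          rw [mul_assoc, ← pow_add, show 2 * e + 2 = 2 * (e + 1) from by ring, ← he, hddef,
            show 2 * ((i + 1) * l₀) = 2 * l₀ * (i + 1) from by ring, pow_mul, ← mul_pow]
        rw [hexp]
        exact one_le_pow₀ hge
      rw [hεdef, div_le_iff₀ (by positivity)]
      calc c₁ = c₁ * 1 := (mul_one _).symm
        _ ≤ c₁ * (g ^ (i + 1) * ρ ^ (2 * e) * ρ ^ 2) := by
            exact mul_le_mul_of_nonneg_left hA3 hc₁.le
        _ = (c₁ * ρ ^ (2 * e)) * (g ^ (i + 1) * ρ ^ 2) := by ring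
        _ ≤ (c₁ * (‖B ^ e‖ ^ 2 * K ^ 2)) * (g ^ (i + 1) * ρ ^ 2) := by
            refine mul_le_mul_of_nonneg_right (mul_le_mul_of_nonneg_left hA2 hc₁.le) ?_
            positivity
        _ = (c₁ * ‖B ^ e‖ ^ 2) * (g ^ (i + 1) * (K ^ 2 * ρ ^ 2)) := by ring
        _ ≤ (Q * covH A R d).trace * (g ^ (i + 1) * (K ^ 2 * ρ ^ 2)) := by
            refine mul_le_mul_of_nonneg_right hA1 ?_
            positivity
        _ = g ^ (i + 1) * (Q * covH A R d).trace * (K ^ 2 * ρ ^ 2) := by ring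
    have htend := hsum.tendsto_atTop_zero
    obtain ⟨i, hi⟩ := (htend.eventually_lt_const hε).exists
    exact absurd (hlb i) (not_le.2 hi)
  · -- criterion → summable
    intro hlt
    -- pick r > ρ with g * r ^ (2 l₀) < 1
    obtain ⟨r, hrρ, hr1⟩ : ∃ r : ℝ, ρ < r ∧ g * r ^ (2 * l₀) < 1 := by
      have hcont : ContinuousAt (fun s : ℝ => g * s ^ (2 * l₀)) ρ := by fun_prop
      have hev : ∀ᶠ s in nhds ρ, g * s ^ (2 * l₀) < 1 := hcont.eventually_lt_const hlt
      have hev2 : ∀ᶠ s in nhdsWithin ρ (Set.Ioi ρ), g * s ^ (2 * l₀) < 1 :=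
        hev.filter_mono nhdsWithin_le_nhds
      have hev3 : ∀ᶠ s in nhdsWithin ρ (Set.Ioi ρ), ρ < s :=
        eventually_mem_nhdsWithin.mono fun s hs => hs
      obtain ⟨s, hs1, hs2⟩ := (hev3.and hev2).exists
      exact ⟨s, hs1, hs2⟩
    have hr0 : 0 < r := lt_of_le_of_lt hρ0 hrρ
    obtain ⟨Cb, hCb0, hCb⟩ := exists_norm_pow_le hn A hrρ
    rw [← hBdef] at hCb
    set m : ℝ := max (r ^ 2) 1 with hmdef
    have hm1 : (1:ℝ) ≤ m := le_max_right _ _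
    have hm0 : (0:ℝ) ≤ m := le_trans zero_le_one hm1
    set q : ℝ := g * m ^ l₀ with hqdef
    have hq0 : 0 ≤ q := by positivity
    have hq1 : q < 1 := by
      rcases le_total (r ^ 2) 1 with h | h
      · have : m = 1 := max_eq_right h
        rw [hqdef, this, one_pow, mul_one]; exact hg1
      · have : m = r ^ 2 := max_eq_left h
        rw [hqdef, this, ← pow_mul]
        exact hr1
    -- summable majorant
    have h0 : Summable (fun k : ℕ => (k : ℝ) * q ^ k) := by
      simpa using summable_pow_mul_geometric_of_norm_lt_one 1
        (r := q) (by rw [Real.norm_eq_abs, abs_of_nonneg hq0]; exact hq1)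
    have h1 : Summable (fun i : ℕ => ((i : ℝ) + 1) * q ^ (i + 1)) := by
      have := (summable_nat_add_iff 1).2 h0
      simpa using this
    have hmaj := h1.mul_left (c₂ * Cb ^ 2 * (l₀ : ℝ))
    refine Summable.of_nonneg_of_le (fun i => ?_) (fun i => ?_) hmaj
    · have := hτnn ((i + 1) * l₀)
      positivity
    · set d := (i + 1) * l₀ with hddef
      have hsum_bound : (Q * covH A R d).trace ≤ (d : ℝ) * (c₂ * Cb ^ 2 * m ^ d) := by
        rw [htrace]
        calc ∑ j ∈ Finset.range d, t j ≤ ∑ j ∈ Finset.range d, c₂ * Cb ^ 2 * m ^ d := by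
              refine Finset.sum_le_sum fun j hj => ?_
              have hb1 : t j ≤ c₂ * ‖B ^ j‖ ^ 2 := (hcb j).2
              have hb2 : ‖B ^ j‖ ^ 2 ≤ (Cb * r ^ j) ^ 2 :=
                pow_le_pow_left₀ (norm_nonneg _) (hCb j) 2
              have hb3 : (Cb * r ^ j) ^ 2 = Cb ^ 2 * (r ^ 2) ^ j := by
                rw [mul_pow, ← pow_mul, ← pow_mul, mul_comm j 2]
              have hb4 : (r ^ 2) ^ j ≤ m ^ j :=
                pow_le_pow_left₀ (sq_nonneg r) (le_max_left _ _) j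
              have hb5 : m ^ j ≤ m ^ d :=
                pow_le_pow_right₀ hm1 (le_of_lt (Finset.mem_range.1 hj))
              calc t j ≤ c₂ * ‖B ^ j‖ ^ 2 := hb1
                _ ≤ c₂ * (Cb * r ^ j) ^ 2 := mul_le_mul_of_nonneg_left hb2 hc₂.le
                _ = c₂ * Cb ^ 2 * (r ^ 2) ^ j := by rw [hb3]; ring
                _ ≤ c₂ * Cb ^ 2 * m ^ j := mul_le_mul_of_nonneg_left hb4 (by positivity)
                _ ≤ c₂ * Cb ^ 2 * m ^ d := mul_le_mul_of_nonneg_left hb5 (by positivity)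
          _ = (d : ℝ) * (c₂ * Cb ^ 2 * m ^ d) := by
              rw [Finset.sum_const, Finset.card_range, nsmul_eq_mul]
      have hmd : m ^ d = (m ^ l₀) ^ (i + 1) := by
        rw [← pow_mul, mul_comm l₀ (i + 1)]
      calc g ^ (i + 1) * (Q * covH A R d).trace
          ≤ g ^ (i + 1) * ((d : ℝ) * (c₂ * Cb ^ 2 * m ^ d)) :=
            mul_le_mul_of_nonneg_left hsum_bound (by positivity)
        _ = c₂ * Cb ^ 2 * (l₀ : ℝ) * (((i : ℝ) + 1) * q ^ (i + 1)) := by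
            rw [hmd, hqdef, mul_pow, hddef]
            push_cast
            ring
end
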